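/- Let T be a commuting n-tuple of invertible power bounded operators on H with a unitary asymptote (X, U). Then the following are equivalent: (i) the inverse tuple T^{-1} has a unitary asymptote satisfying the Lower Orbit Condition; (ii) the pair (X, U^{-1}) (which is a unitary asymptote of T^{-1}) satisfies the Lower Orbit Condition; (iii) X is invertible; (iv) T is similar to a commuting n-tuple of unitaries. -/

import Mathlib

open ContinuousLinearMap

private lemma aux_mul_units {M : Type*} [Monoid M] (A : M) (b c : Mˣ)
    (h : A * ↑b = ↑c * A) : A * ↑b⁻¹ = ↑c⁻¹ * A := by
  have h2 : (↑c⁻¹ : M) * (A * ↑b) * ↑b⁻¹ = ↑c⁻¹ * (↑c * A) * ↑b⁻¹ := by rw [h]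
  simpa [mul_assoc] using h2.symm

private lemma aux_units_iff {M : Type*} [Monoid M] (Y : M) (b c : Mˣ) :
    Y * ↑b = ↑c⁻¹ * Y ↔ Y * ↑b⁻¹ = ↑c * Y := by
  constructor
  · intro h; simpa using aux_mul_units Y b c⁻¹ h
  · intro h; simpa using aux_mul_units Y b⁻¹ c h

private lemma aux_prod_one {M : Type*} [Monoid M] :
    ∀ {n : ℕ} (f g : Fin n → M), (∀ i j, Commute (f i) (g j)) → (∀ i, f i * g i = 1) →
      (List.ofFn f).prod * (List.ofFn g).prod = 1 := by
  intro n
  induction n with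
  | zero => intro f g _ _; simp
  | succ m ih =>
    intro f g hc hone
    simp only [List.ofFn_succ, List.prod_cons]
    have hcomm : Commute (List.ofFn fun i => f (Fin.succ i)).prod (g 0) :=
      Commute.list_prod_left _ _ (by
        intro x hx
        obtain ⟨i, rfl⟩ := List.mem_ofFn.mp hx
        exact hc _ _)
    calc f 0 * (List.ofFn fun i => f (Fin.succ i)).prod *
          (g 0 * (List.ofFn fun i => g (Fin.succ i)).prod)
        = f 0 * ((List.ofFn fun i => f (Fin.succ i)).prod * g 0 *
            (List.ofFn fun i => g (Fin.succ i)).prod) := by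
          simp only [mul_assoc]
      _ = f 0 * (g 0 * ((List.ofFn fun i => f (Fin.succ i)).prod *
            (List.ofFn fun i => g (Fin.succ i)).prod)) := by rw [hcomm.eq, mul_assoc]
      _ = (f 0 * g 0) * ((List.ofFn fun i => f (Fin.succ i)).prod *
            (List.ofFn fun i => g (Fin.succ i)).prod) := by rw [mul_assoc]
      _ = 1 := by
          rw [hone 0, ih _ _ (fun i j => hc _ _) (fun i => hone _), one_mul]

private lemma aux_tuplePow_zero {n : ℕ} {H : Type} [NormedAddCommGroup H]
    [InnerProductSpace ℂ H] (T : Fin n → H →L[ℂ] H) :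
    (List.ofFn fun i => T i ^ (0 : ℕ)).prod = 1 := by
  simp


private lemma aux_comp_units {E F : Type*} [NormedAddCommGroup E] [NormedSpace ℂ E]
    [NormedAddCommGroup F] [NormedSpace ℂ F] (A : E →L[ℂ] F)
    (b : (E →L[ℂ] E)ˣ) (c : (F →L[ℂ] F)ˣ)
    (h : A ∘L (↑b : E →L[ℂ] E) = (↑c : F →L[ℂ] F) ∘L A) :
    A ∘L (↑b⁻¹ : E →L[ℂ] E) = (↑c⁻¹ : F →L[ℂ] F) ∘L A := by
  have hb : (↑b : E →L[ℂ] E) ∘L (↑b⁻¹ : E →L[ℂ] E) = 1 := by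
    rw [← ContinuousLinearMap.mul_def]; exact b.mul_inv
  have hc : (↑c⁻¹ : F →L[ℂ] F) ∘L (↑c : F →L[ℂ] F) = 1 := by
    rw [← ContinuousLinearMap.mul_def]; exact c.inv_mul
  calc A ∘L (↑b⁻¹ : E →L[ℂ] E)
      = ((↑c⁻¹ : F →L[ℂ] F) ∘L (↑c : F →L[ℂ] F)) ∘L (A ∘L (↑b⁻¹ : E →L[ℂ] E)) := by
        rw [hc, ContinuousLinearMap.one_def, ContinuousLinearMap.id_comp]
    _ = (↑c⁻¹ : F →L[ℂ] F) ∘L (((↑c : F →L[ℂ] F) ∘L A) ∘L (↑b⁻¹ : E →L[ℂ] E)) := by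
        rw [ContinuousLinearMap.comp_assoc, ContinuousLinearMap.comp_assoc]
    _ = (↑c⁻¹ : F →L[ℂ] F) ∘L ((A ∘L (↑b : E →L[ℂ] E)) ∘L (↑b⁻¹ : E →L[ℂ] E)) := by rw [h]
    _ = (↑c⁻¹ : F →L[ℂ] F) ∘L (A ∘L ((↑b : E →L[ℂ] E) ∘L (↑b⁻¹ : E →L[ℂ] E))) := by
        rw [ContinuousLinearMap.comp_assoc]
    _ = (↑c⁻¹ : F →L[ℂ] F) ∘L A := by
        rw [hb, ContinuousLinearMap.one_def, ContinuousLinearMap.comp_id]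

private lemma aux_comp_units_iff {E F : Type*} [NormedAddCommGroup E] [NormedSpace ℂ E]
    [NormedAddCommGroup F] [NormedSpace ℂ F] (A : E →L[ℂ] F)
    (b : (E →L[ℂ] E)ˣ) (c : (F →L[ℂ] F)ˣ) :
    A ∘L (↑b : E →L[ℂ] E) = (↑c⁻¹ : F →L[ℂ] F) ∘L A ↔
      A ∘L (↑b⁻¹ : E →L[ℂ] E) = (↑c : F →L[ℂ] F) ∘L A := by
  constructor
  · intro h; simpa using aux_comp_units A b c⁻¹ h
  · intro h; simpa using aux_comp_units A b⁻¹ c h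


/-- A commuting tuple of operators. -/
def CommutingTuple {n : ℕ} {H : Type} [NormedAddCommGroup H] [InnerProductSpace ℂ H]
    (T : Fin n → H →L[ℂ] H) : Prop :=
  ∀ i j, T i ∘L T j = T j ∘L T i

/-- A tuple of unitary operators. -/
def UnitaryTuple {n : ℕ} {K : Type} [NormedAddCommGroup K] [InnerProductSpace ℂ K]
    [CompleteSpace K] (U : Fin n → K →L[ℂ] K) : Prop :=
  ∀ i, U i ∈ unitary (K →L[ℂ] K)

/-- `X` intertwines the tuple `T` with the tuple `U`. -/
def IntertwinesTuple {n : ℕ} {H K : Type} [NormedAddCommGroup H] [InnerProductSpace ℂ H]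
    [NormedAddCommGroup K] [InnerProductSpace ℂ K]
    (T : Fin n → H →L[ℂ] H) (U : Fin n → K →L[ℂ] K) (X : H →L[ℂ] K) : Prop :=
  ∀ i, X ∘L T i = U i ∘L X

/-- `(X, U)` is a unitary asymptote of the commuting tuple `T`: it is a unitary
intertwining pair which is universal among all unitary intertwining pairs of `T`. -/
def IsUnitaryAsymptote {n : ℕ} {H K : Type}
    [NormedAddCommGroup H] [InnerProductSpace ℂ H] [CompleteSpace H]
    [NormedAddCommGroup K] [InnerProductSpace ℂ K] [CompleteSpace K]
    (T : Fin n → H →L[ℂ] H) (U : Fin n → K →L[ℂ] K) (X : H →L[ℂ] K) : Prop :=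
  UnitaryTuple U ∧ IntertwinesTuple T U X ∧
  ∀ (K' : Type) (_ : NormedAddCommGroup K') (_ : InnerProductSpace ℂ K')
    (_ : CompleteSpace K') (U' : Fin n → K' →L[ℂ] K') (X' : H →L[ℂ] K'),
    UnitaryTuple U' → IntertwinesTuple T U' X' →
    ∃! Y : K →L[ℂ] K', IntertwinesTuple U U' Y ∧ X' = Y ∘L X

/-- Minimality of a unitary intertwining pair: the only closed subspace of `K`
containing the range of `X` and reducing every `U i` is `K` itself. -/
def MinimalPair {n : ℕ} {H K : Type}
    [NormedAddCommGroup H] [InnerProductSpace ℂ H]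
    [NormedAddCommGroup K] [InnerProductSpace ℂ K] [CompleteSpace K]
    (U : Fin n → K →L[ℂ] K) (X : H →L[ℂ] K) : Prop :=
  ∀ M : Submodule ℂ K, IsClosed (M : Set K) → (∀ h, X h ∈ M) →
    (∀ i, ∀ y ∈ M, U i y ∈ M) → (∀ i, ∀ y ∈ M, adjoint (U i) y ∈ M) → M = ⊤


/-- `T^k` for a multi-index `k ∈ ℤ₊ⁿ`. -/
def tuplePow {n : ℕ} {H : Type} [NormedAddCommGroup H] [InnerProductSpace ℂ H]
    (T : Fin n → H →L[ℂ] H) (k : Fin n → ℕ) : H →L[ℂ] H :=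
  (List.ofFn fun i => T i ^ k i).prod

/-- A witness that `T` has a unitary asymptote satisfying the Lower Orbit Condition. -/
structure AsymptoteLOCWitness {n : ℕ} {H : Type}
    [NormedAddCommGroup H] [InnerProductSpace ℂ H] [CompleteSpace H]
    (T : Fin n → H →L[ℂ] H) where
  K' : Type
  [grp : NormedAddCommGroup K']
  [ip : InnerProductSpace ℂ K']
  [cs : CompleteSpace K']
  U' : Fin n → K' →L[ℂ] K'
  X' : H →L[ℂ] K'
  asymp : IsUnitaryAsymptote T U' X'
  κ : ℝ
  κnn : 0 ≤ κ
  loc : ∀ h : H, (⨅ k : Fin n → ℕ, ‖tuplePow T k h‖) ≤ κ * ‖X' h‖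

/-- A witness that `T` is similar to a commuting tuple of unitaries. -/
structure UnitarySimilarityWitness {n : ℕ} {H : Type}
    [NormedAddCommGroup H] [InnerProductSpace ℂ H] [CompleteSpace H]
    (T : Fin n → H →L[ℂ] H) where
  K' : Type
  [grp : NormedAddCommGroup K']
  [ip : InnerProductSpace ℂ K']
  [cs : CompleteSpace K']
  W : Fin n → K' →L[ℂ] K'
  Z : H ≃L[ℂ] K'
  unit : UnitaryTuple W
  comm : CommutingTuple W
  intertwine : ∀ i, (Z : H →L[ℂ] K') ∘L T i = W i ∘L (Z : H →L[ℂ] K')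

/-- For a power bounded commuting tuple of invertible operators with unitary asymptote
`(X, U)`, the following are equivalent: (i) `T⁻¹` has a unitary asymptote satisfying
the Lower Orbit Condition; (ii) the asymptote `(X, U⁻¹)` of `T⁻¹` satisfies the Lower
Orbit Condition; (iii) `X` is invertible; (iv) `T` is similar to a commuting tuple of
unitaries. -/
theorem inverse_tuple_LOC_tfae {n : ℕ} {H K : Type}
    [NormedAddCommGroup H] [InnerProductSpace ℂ H] [CompleteSpace H]
    [NormedAddCommGroup K] [InnerProductSpace ℂ K] [CompleteSpace K]
    (T : Fin n → H →L[ℂ] H) (U : Fin n → K →L[ℂ] K) (X : H →L[ℂ] K) (s : ℝ)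
    (hT : CommutingTuple T) (hinv : ∀ i, IsUnit (T i))
    (hs : ∀ k : Fin n → ℕ, ‖tuplePow T k‖ ≤ s)
    (hA : IsUnitaryAsymptote T U X) :
    [Nonempty (AsymptoteLOCWitness
        (fun i => (((hinv i).unit⁻¹ : (H →L[ℂ] H)ˣ) : H →L[ℂ] H))),
      ∃ κ : ℝ, 0 ≤ κ ∧ ∀ h : H,
        (⨅ k : Fin n → ℕ,
          ‖tuplePow (fun i => (((hinv i).unit⁻¹ : (H →L[ℂ] H)ˣ) : H →L[ℂ] H)) k h‖)
          ≤ κ * ‖X h‖,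
      ∃ Z : H ≃L[ℂ] K, (Z : H →L[ℂ] K) = X,
      Nonempty (UnitarySimilarityWitness T)].TFAE := by
  classical
  set Tinv : Fin n → H →L[ℂ] H :=
    fun i => (((hinv i).unit⁻¹ : (H →L[ℂ] H)ˣ) : H →L[ℂ] H) with hTinvdef
  -- basic unit facts
  have hUu : ∀ i, (U i) * star (U i) = 1 := fun i => (Unitary.mem_iff.mp (hA.1 i)).2
  have hUu' : ∀ i, star (U i) * U i = 1 := fun i => (Unitary.mem_iff.mp (hA.1 i)).1
  let cU : Fin n → (K →L[ℂ] K)ˣ := fun i => ⟨U i, star (U i), hUu i, hUu' i⟩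
  have hXTinv : ∀ i, X ∘L Tinv i = star (U i) ∘L X := by
    intro i
    have h := aux_comp_units X ((hinv i).unit) (cU i)
      (by rw [(hinv i).unit_spec]; exact hA.2.1 i)
    exact h
  have hTmulTinv : ∀ i, T i * Tinv i = 1 := fun i => by
    rw [hTinvdef]
    conv_lhs => rw [← (hinv i).unit_spec]
    exact Units.mul_inv _
  have hTT : ∀ i j, Commute (T i) (T j) := fun i j => by
    have h := hT i j
    rw [← ContinuousLinearMap.mul_def, ← ContinuousLinearMap.mul_def] at h
    exact h
  have hTTinv : ∀ i j, Commute (T i) (Tinv j) := fun i j => by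
    have h := hTT i j
    rw [← (hinv j).unit_spec] at h
    exact h.units_inv_right
  have hprod : ∀ k : Fin n → ℕ, tuplePow T k * tuplePow Tinv k = 1 := by
    intro k
    refine aux_prod_one _ _ (fun i j => (hTTinv i j).pow_pow _ _) (fun i => ?_)
    rw [← (hTTinv i i).mul_pow, hTmulTinv i, one_pow]
  have hbdd : ∀ h : H, BddBelow (Set.range fun k : Fin n → ℕ => ‖tuplePow Tinv k h‖) :=
    fun h => ⟨0, by rintro x ⟨k, rfl⟩; exact norm_nonneg _⟩
  have hinf_le : ∀ h : H, (⨅ k : Fin n → ℕ, ‖tuplePow Tinv k h‖) ≤ ‖h‖ := by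
    intro h
    have h0 := ciInf_le (hbdd h) (fun _ => 0 : Fin n → ℕ)
    have e : tuplePow Tinv (fun _ => 0) = 1 := by
      simp [tuplePow]
    rw [e] at h0
    simpa using h0
  have hUX : ∀ i (h : H), U i (X h) = X (T i h) := by
    intro i h
    have := congrArg (fun A : H →L[ℂ] K => A h) (hA.2.1 i)
    simpa using this.symm
  have hUinvX : ∀ i (h : H), star (U i) (X h) = X (Tinv i h) := by
    intro i h
    have := congrArg (fun A : H →L[ℂ] K => A h) (hXTinv i)
    simpa using this.symm
  -- `(X, U⁻¹)` is a unitary asymptote of `T⁻¹`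
  have hAinv : IsUnitaryAsymptote Tinv (fun i => star (U i)) X := by
    refine ⟨fun i => Unitary.star_mem (hA.1 i), fun i => hXTinv i, ?_⟩
    · intro K' iG iP iC U' X' hU' hI'
      have hU'u : ∀ i, (U' i) * star (U' i) = 1 := fun i => (Unitary.mem_iff.mp (hU' i)).2
      have hU'u' : ∀ i, star (U' i) * U' i = 1 := fun i => (Unitary.mem_iff.mp (hU' i)).1
      let cU' : Fin n → (K' →L[ℂ] K')ˣ := fun i => ⟨U' i, star (U' i), hU'u i, hU'u' i⟩
      have hI'' : IntertwinesTuple T (fun i => star (U' i)) X' := by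
        intro i
        have h2 := aux_comp_units X' ((hinv i).unit⁻¹) (cU' i) (hI' i)
        rw [inv_inv] at h2
        rw [(hinv i).unit_spec] at h2
        exact h2
      have hEU := hA.2.2 K' iG iP iC (fun i => star (U' i)) X'
        (fun i => Unitary.star_mem (hU' i)) hI''
      refine (existsUnique_congr fun Y => and_congr_left fun _ => ?_).mp hEU
      constructor
      · intro hY i
        exact (aux_comp_units_iff Y (cU i) (cU' i)).mp (hY i)
      · intro hY i
        exact (aux_comp_units_iff Y (cU i) (cU' i)).mpr (hY i)
  tfae_have 3 → 2
  | ⟨Z, hZ⟩ => by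
    refine ⟨‖(Z.symm : K →L[ℂ] H)‖, norm_nonneg _, fun h => ?_⟩
    refine (hinf_le h).trans ?_
    have : h = (Z.symm : K →L[ℂ] H) (X h) := by rw [← hZ]; simp
    calc ‖h‖ = ‖(Z.symm : K →L[ℂ] H) (X h)‖ := by rw [← this]
      _ ≤ ‖(Z.symm : K →L[ℂ] H)‖ * ‖X h‖ := ContinuousLinearMap.le_opNorm _ _
  tfae_have 2 → 3
  | ⟨κ, hκ, hloc⟩ => by
    have hs0 : (0 : ℝ) ≤ s := le_trans (norm_nonneg _) (hs fun _ => 0)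
    have hlow : ∀ h : H, ‖h‖ ≤ s * κ * ‖X h‖ := by
      intro h
      have h1 : ∀ k : Fin n → ℕ, ‖h‖ ≤ s * ‖tuplePow Tinv k h‖ := by
        intro k
        have e : tuplePow T k (tuplePow Tinv k h) = h := by
          have := congrArg (fun A : H →L[ℂ] H => A h) (hprod k)
          simpa [ContinuousLinearMap.mul_apply] using this
        calc ‖h‖ = ‖tuplePow T k (tuplePow Tinv k h)‖ := by rw [e]
          _ ≤ ‖tuplePow T k‖ * ‖tuplePow Tinv k h‖ := ContinuousLinearMap.le_opNorm _ _
          _ ≤ s * ‖tuplePow Tinv k h‖ :=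
              mul_le_mul_of_nonneg_right (hs k) (norm_nonneg _)
      have h2 : ‖h‖ ≤ s * ⨅ k : Fin n → ℕ, ‖tuplePow Tinv k h‖ := by
        rw [Real.mul_iInf_of_nonneg hs0]
        exact le_ciInf h1
      calc ‖h‖ ≤ s * ⨅ k : Fin n → ℕ, ‖tuplePow Tinv k h‖ := h2
        _ ≤ s * (κ * ‖X h‖) := mul_le_mul_of_nonneg_left (hloc h) hs0
        _ = s * κ * ‖X h‖ := (mul_assoc _ _ _).symm
    have hker : LinearMap.ker (X : H →ₗ[ℂ] K) = ⊥ := by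
      rw [LinearMap.ker_eq_bot']
      intro h hh
      have := hlow h
      erw [hh] at this
      simpa using le_antisymm (by simpa using this) (norm_nonneg h)
    have hanti : AntilipschitzWith (Real.toNNReal (s * κ)) X :=
      X.antilipschitz_of_bound fun x =>
        (hlow x).trans (mul_le_mul_of_nonneg_right (Real.le_coe_toNNReal _) (norm_nonneg _))
    have hclosed : IsClosed (Set.range X) := hanti.isClosed_range X.uniformContinuous
    set M : Submodule ℂ K := LinearMap.range (X : H →ₗ[ℂ] K) with hMdef
    have hMclosed : IsClosed (M : Set K) := by
      rw [hMdef]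
      exact hclosed
    haveI : CompleteSpace M := hMclosed.completeSpace_coe
    set P : K →L[ℂ] K := M.subtypeL ∘L M.orthogonalProjectionOnto with hPdef
    have hPmem : ∀ y : K, P y ∈ M := fun y => (M.orthogonalProjectionOnto y).2
    have hPfix : ∀ y ∈ M, P y = y := fun y hy => Submodule.starProjection_eq_self_iff.mpr hy
    have hPzero : ∀ w ∈ Mᗮ, P w = 0 := by
      intro w hw
      have : M.orthogonalProjectionOnto w = 0 :=
        Submodule.orthogonalProjectionOnto_apply_of_mem_orthogonal hw
      simp [hPdef, this]
    have hMmem : ∀ (h : H), X h ∈ M := by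
      intro h
      rw [hMdef]
      exact LinearMap.mem_range.mpr ⟨h, rfl⟩
    have hMU : ∀ i, ∀ y ∈ M, U i y ∈ M := by
      intro i y hy
      rw [hMdef, LinearMap.mem_range] at hy
      obtain ⟨h, rfl⟩ := hy
      erw [hUX i h]
      exact hMmem _
    have hMUadj : ∀ i, ∀ y ∈ M, star (U i) y ∈ M := by
      intro i y hy
      rw [hMdef, LinearMap.mem_range] at hy
      obtain ⟨h, rfl⟩ := hy
      erw [hUinvX i h]
      exact hMmem _
    have hperp : ∀ i, ∀ w ∈ Mᗮ, U i w ∈ Mᗮ := by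
      intro i w hw
      rw [Submodule.mem_orthogonal] at hw ⊢
      intro u hu
      rw [← ContinuousLinearMap.adjoint_inner_left (U i) w u, ← ContinuousLinearMap.star_eq_adjoint]
      exact hw _ (hMUadj i u hu)
    have hPU : ∀ i, P ∘L U i = U i ∘L P := by
      intro i
      ext y
      have hy : y = P y + (y - P y) := by abel
      have hperp' : y - P y ∈ Mᗮ := Submodule.sub_starProjection_mem_orthogonal y
      simp only [ContinuousLinearMap.comp_apply]
      calc P (U i y) = P (U i (P y + (y - P y))) := by rw [← hy]
        _ = P (U i (P y)) + P (U i (y - P y)) := by rw [map_add, map_add]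
        _ = U i (P y) + 0 := by
            rw [hPfix _ (hMU i _ (hPmem y)), hPzero _ (hperp i _ hperp')]
        _ = U i (P y) := add_zero _
    obtain ⟨Y, -, hYuniq⟩ := hA.2.2 K _ _ _ U X hA.1 hA.2.1
    have hid : (1 : K →L[ℂ] K) = Y := by
      refine hYuniq 1 ⟨fun i => ?_, ?_⟩
      · rw [ContinuousLinearMap.one_def, ContinuousLinearMap.id_comp,
          ContinuousLinearMap.comp_id]
      · rw [ContinuousLinearMap.one_def, ContinuousLinearMap.id_comp]
    have hPid : P = Y := by
      refine hYuniq P ⟨hPU, ?_⟩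
      ext h
      simp only [ContinuousLinearMap.comp_apply]
      exact (hPfix _ (hMmem h)).symm
    have hPone : P = 1 := hPid.trans hid.symm
    have hsurj : LinearMap.range (X : H →ₗ[ℂ] K) = ⊤ := by
      rw [eq_top_iff]
      rintro y -
      have hy : P y = y := by rw [hPone]; rfl
      rw [← hMdef, ← hy]
      exact hPmem y
    exact ⟨ContinuousLinearEquiv.ofBijective X hker hsurj,
      ContinuousLinearEquiv.coe_ofBijective X hker hsurj⟩
  tfae_have 3 → 4
  | ⟨Z, hZ⟩ => by
    refine ⟨⟨K, U, Z, hA.1, ?_, ?_⟩⟩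
    · intro i j
      ext y
      obtain ⟨h, rfl⟩ : ∃ h, X h = y := ⟨Z.symm y, by rw [← hZ]; simp⟩
      simp only [ContinuousLinearMap.comp_apply]
      have e : T i (T j h) = T j (T i h) := by
        have := congrArg (fun A : H →L[ℂ] H => A h) (hT i j)
        simpa using this
      rw [hUX j h, hUX i (T j h), hUX i h, hUX j (T i h), e]
    · intro i
      rw [hZ]
      exact hA.2.1 i
  tfae_have 4 → 2
  | ⟨w⟩ => by
    letI := w.grp
    letI := w.ip
    letI := w.cs
    obtain ⟨Y, ⟨-, hYfac⟩, -⟩ :=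
      hA.2.2 w.K' _ _ _ w.W (w.Z : H →L[ℂ] w.K') w.unit w.intertwine
    refine ⟨‖(w.Z.symm : w.K' →L[ℂ] H)‖ * ‖Y‖,
      mul_nonneg (norm_nonneg _) (norm_nonneg _), fun h => ?_⟩
    refine (hinf_le h).trans ?_
    have e : (w.Z : H →L[ℂ] w.K') h = Y (X h) := by
      rw [hYfac]; rfl
    calc ‖h‖ = ‖(w.Z.symm : w.K' →L[ℂ] H) ((w.Z : H →L[ℂ] w.K') h)‖ := by simp
      _ ≤ ‖(w.Z.symm : w.K' →L[ℂ] H)‖ * ‖(w.Z : H →L[ℂ] w.K') h‖ :=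
          ContinuousLinearMap.le_opNorm _ _
      _ = ‖(w.Z.symm : w.K' →L[ℂ] H)‖ * ‖Y (X h)‖ := by rw [e]
      _ ≤ ‖(w.Z.symm : w.K' →L[ℂ] H)‖ * (‖Y‖ * ‖X h‖) :=
          mul_le_mul_of_nonneg_left (Y.le_opNorm _) (norm_nonneg _)
      _ = ‖(w.Z.symm : w.K' →L[ℂ] H)‖ * ‖Y‖ * ‖X h‖ := (mul_assoc _ _ _).symm
  tfae_have 3 → 1
  | ⟨Z, hZ⟩ => by
    refine ⟨⟨K, fun i => star (U i), X, hAinv, ‖(Z.symm : K →L[ℂ] H)‖,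
      norm_nonneg _, fun h => ?_⟩⟩
    refine (hinf_le h).trans ?_
    have : h = (Z.symm : K →L[ℂ] H) (X h) := by rw [← hZ]; simp
    calc ‖h‖ = ‖(Z.symm : K →L[ℂ] H) (X h)‖ := by rw [← this]
      _ ≤ ‖(Z.symm : K →L[ℂ] H)‖ * ‖X h‖ := ContinuousLinearMap.le_opNorm _ _
  tfae_have 1 → 2
  | ⟨w⟩ => by
    letI := w.grp
    letI := w.ip
    letI := w.cs
    obtain ⟨Y, ⟨-, hYfac⟩, -⟩ :=
      hAinv.2.2 w.K' _ _ _ w.U' w.X' w.asymp.1 w.asymp.2.1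
    refine ⟨w.κ * ‖Y‖, mul_nonneg w.κnn (norm_nonneg _), fun h => ?_⟩
    calc (⨅ k : Fin n → ℕ, ‖tuplePow Tinv k h‖) ≤ w.κ * ‖w.X' h‖ := w.loc h
      _ = w.κ * ‖Y (X h)‖ := by rw [hYfac]; rfl
      _ ≤ w.κ * (‖Y‖ * ‖X h‖) := mul_le_mul_of_nonneg_left (Y.le_opNorm _) w.κnn
      _ = w.κ * ‖Y‖ * ‖X h‖ := (mul_assoc _ _ _).symm
  tfae_finish
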